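/- Let T₁, T_d > 0, assume U''(s) > 0 for all s ∈ ℝ, and let A be the 2d×2d real matrix with entries a_{d+1,d+1} = √T₁, a_{2d,2d} = √T_d, and a_{ij} = 0 otherwise. Then the pair (b, A) satisfies Hörmander's condition at every point x ∈ ℝ^{2d}: there exists n = n(x) ∈ ℕ such that the columns of the matrices A, B₁(x)A, B₂(x)A, …, B_n(x)A together span ℝ^{2d}, i.e., Rank[A, B₁(x)A, …, B_n(x)A] = 2d. -/

import Mathlib

open scoped BigOperators
open Matrix

noncomputable section

abbrev EE (d : ℕ) : Type := Fin (2 * d) → ℝ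

/-- The Hamiltonian on `ℝ^{2d}`, where coordinates `0,…,d-1` are `z₁,…,z_d` and
coordinates `d,…,2d-1` are `u₁,…,u_d`. -/
noncomputable def hamE (d : ℕ) (V U : ℝ → ℝ) (x : EE d) : ℝ :=
  (∑ i : Fin d,
      ((x ⟨d + i.1, by have := i.2; omega⟩) ^ 2 / 2 + V (x ⟨i.1, by have := i.2; omega⟩))) +
    ∑ i : Fin (d - 1),
      U (x ⟨i.1 + 1, by have := i.2; omega⟩ - x ⟨i.1, by have := i.2; omega⟩)

/-- The drift `b(z,u) = (u₁,…,u_d, -(∂_{z₁}H + γ₁u₁), -∂_{z₂}H, …, -∂_{z_{d-1}}H,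
-(∂_{z_d}H + γ_d u_d))` on `ℝ^{2d}`. -/
noncomputable def driftE (d : ℕ) (γ₁ γd : ℝ) (V U : ℝ → ℝ) (x : EE d) : EE d := fun i =>
  if h : i.1 < d then x ⟨d + i.1, by omega⟩
  else
    -(fderiv ℝ (hamE d V U) x (Pi.single (⟨i.1 - d, by have := i.2; omega⟩ : Fin (2 * d)) 1))
      - (if i.1 = d then γ₁ * x i else 0)
      - (if i.1 = 2 * d - 1 then γd * x i else 0)

/-- The Jacobian matrix `∇b(x) = (∂_j b^i(x))_{ij}`. -/
noncomputable def jacE (d : ℕ) (b : EE d → EE d) (x : EE d) : Matrix (Fin (2 * d)) (Fin (2 * d)) ℝ :=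
  Matrix.of fun i j => fderiv ℝ (fun y => b y i) x (Pi.single j 1)

/-- `BmatE d b n` is the matrix `B_{n+1}`: `B₁(x) = ∇b(x)` and
`B_{n+1}(x) = (b(x)·∇)B_n(x) - ∇b(x)·B_n(x)`. -/
noncomputable def BmatE (d : ℕ) (b : EE d → EE d) : ℕ → EE d → Matrix (Fin (2 * d)) (Fin (2 * d)) ℝ
  | 0 => jacE d b
  | n + 1 => fun x =>
      (Matrix.of fun i j => fderiv ℝ (fun y => BmatE d b n y i j) x (b x)) -
        jacE d b x * BmatE d b n x

/-- The matrix `A` with `a_{d+1,d+1} = √T₁`, `a_{2d,2d} = √T_d` (1-based indexing)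
and all other entries zero. -/
noncomputable def matA (d : ℕ) (T₁ Td : ℝ) : Matrix (Fin (2 * d)) (Fin (2 * d)) ℝ :=
  Matrix.of fun i j =>
    if i.1 = d ∧ j.1 = d then Real.sqrt T₁
    else if i.1 = 2 * d - 1 ∧ j.1 = 2 * d - 1 then Real.sqrt Td
    else 0


namespace S17

variable {d : ℕ} {V U : ℝ → ℝ}

/-- coordinate projection as CLM -/
def pj (d : ℕ) (a : Fin (2*d)) : EE d →L[ℝ] ℝ := ContinuousLinearMap.proj a

@[simp] lemma pj_apply (a : Fin (2*d)) (v : EE d) : pj d a v = v a := rfl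

/-- the derivative of hamE -/
def hamDer (d : ℕ) (V U : ℝ → ℝ) (x : EE d) : EE d →L[ℝ] ℝ :=
  (∑ i : Fin d,
      ((x ⟨d + i.1, by have := i.2; omega⟩) • pj d ⟨d + i.1, by have := i.2; omega⟩
        + deriv V (x ⟨i.1, by have := i.2; omega⟩) • pj d ⟨i.1, by have := i.2; omega⟩)) +
    ∑ i : Fin (d - 1),
      deriv U (x ⟨i.1 + 1, by have := i.2; omega⟩ - x ⟨i.1, by have := i.2; omega⟩) •
        (pj d ⟨i.1 + 1, by have := i.2; omega⟩ - pj d ⟨i.1, by have := i.2; omega⟩)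

lemma hamE_hasFDerivAt (hV : ContDiff ℝ (⊤ : ℕ∞) V) (hU : ContDiff ℝ (⊤ : ℕ∞) U)
    (x : EE d) : HasFDerivAt (hamE d V U) (hamDer d V U x) x := by
  have hVd : Differentiable ℝ V := hV.differentiable (by simp)
  have hUd : Differentiable ℝ U := hU.differentiable (by simp)
  apply HasFDerivAt.add
  · apply HasFDerivAt.fun_sum
    intro i _
    apply HasFDerivAt.add
    · have h1 : HasDerivAt (fun t : ℝ => t ^ 2 / 2)
          (x ⟨d + i.1, by have := i.2; omega⟩) (x ⟨d + i.1, by have := i.2; omega⟩) := by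
        have := (hasDerivAt_pow 2 (x ⟨d + i.1, by have := i.2; omega⟩)).div_const 2
        exact this.congr_deriv (by norm_num)
      exact h1.comp_hasFDerivAt x (pj d ⟨d + i.1, by have := i.2; omega⟩).hasFDerivAt
    · exact ((hVd _).hasDerivAt).comp_hasFDerivAt x
        (pj d ⟨i.1, by have := i.2; omega⟩).hasFDerivAt
  · apply HasFDerivAt.fun_sum
    intro i _
    exact ((hUd _).hasDerivAt).comp_hasFDerivAt x
      ((pj d ⟨i.1 + 1, by have := i.2; omega⟩) - (pj d ⟨i.1, by have := i.2; omega⟩)).hasFDerivAt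


lemma xeq (x : EE d) {a b : ℕ} (ha : a < 2*d) (hb : b < 2*d) (h : a = b) :
    x ⟨a, ha⟩ = x ⟨b, hb⟩ := by subst h; rfl

lemma single_eval (k : ℕ) (hk : k < 2*d) (a : Fin (2*d)) :
    (Pi.single (⟨k, hk⟩ : Fin (2*d)) (1:ℝ) : EE d) a = if a.1 = k then 1 else 0 := by
  simp [Pi.single_apply, Fin.ext_iff]

lemma hamDer_single (x : EE d) (k : ℕ) (hk : k < d) :
    hamDer d V U x (Pi.single (⟨k, by omega⟩ : Fin (2*d)) 1) =
      deriv V (x ⟨k, by omega⟩)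
        + (if 1 ≤ k then deriv U (x ⟨k, by omega⟩ - x ⟨k-1, by omega⟩) else 0)
        - (if k+1 < d then deriv U (x ⟨k+1, by omega⟩ - x ⟨k, by omega⟩) else 0) := by
  rw [hamDer, ContinuousLinearMap.add_apply, ContinuousLinearMap.sum_apply,
    ContinuousLinearMap.sum_apply]
  have e1 : (∑ i : Fin d,
      ((x ⟨d + i.1, by have := i.2; omega⟩) • pj d ⟨d + i.1, by have := i.2; omega⟩
        + deriv V (x ⟨i.1, by have := i.2; omega⟩) • pj d ⟨i.1, by have := i.2; omega⟩)
          (Pi.single (⟨k, by omega⟩ : Fin (2*d)) 1)) = deriv V (x ⟨k, by omega⟩) := by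
    rw [Finset.sum_congr rfl (fun i _ => ?_),
      Finset.sum_ite_eq' Finset.univ (⟨k,hk⟩ : Fin d)
        (fun i => deriv V (x ⟨i.1, by have := i.2; omega⟩))]
    · simp
    · rw [ContinuousLinearMap.add_apply, ContinuousLinearMap.smul_apply,
        ContinuousLinearMap.smul_apply, pj_apply, pj_apply, single_eval, single_eval,
        smul_eq_mul, smul_eq_mul]
      have hne : ¬((⟨d + i.1, by have := i.2; omega⟩ : Fin (2*d)).1 = k) := by simp; omega
      rw [if_neg hne, mul_zero, zero_add, mul_ite, mul_one, mul_zero]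
      congr 1
      simp [Fin.ext_iff]
  rw [e1]
  have e2 : (∑ i : Fin (d-1),
      (deriv U (x ⟨i.1 + 1, by have := i.2; omega⟩ - x ⟨i.1, by have := i.2; omega⟩) •
        (pj d ⟨i.1 + 1, by have := i.2; omega⟩ - pj d ⟨i.1, by have := i.2; omega⟩))
          (Pi.single (⟨k, by omega⟩ : Fin (2*d)) 1)) =
      (∑ i : Fin (d-1), (if i.1 + 1 = k then
          deriv U (x ⟨i.1 + 1, by have := i.2; omega⟩ - x ⟨i.1, by have := i.2; omega⟩) else 0))
      - (∑ i : Fin (d-1), (if i.1 = k then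
          deriv U (x ⟨i.1 + 1, by have := i.2; omega⟩ - x ⟨i.1, by have := i.2; omega⟩) else 0)) := by
    rw [← Finset.sum_sub_distrib]
    refine Finset.sum_congr rfl (fun i _ => ?_)
    rw [ContinuousLinearMap.smul_apply, ContinuousLinearMap.sub_apply, pj_apply, pj_apply,
      single_eval, single_eval, smul_eq_mul, mul_sub, mul_ite, mul_one, mul_zero, mul_ite,
      mul_one, mul_zero]
  rw [e2]
  have e3 : (∑ i : Fin (d-1), (if i.1 + 1 = k then
          deriv U (x ⟨i.1 + 1, by have := i.2; omega⟩ - x ⟨i.1, by have := i.2; omega⟩) else 0)) =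
      (if 1 ≤ k then deriv U (x ⟨k, by omega⟩ - x ⟨k-1, by omega⟩) else 0) := by
    by_cases h1 : 1 ≤ k
    · rw [if_pos h1, Finset.sum_congr rfl (fun i _ => ?_),
        Finset.sum_ite_eq' Finset.univ (⟨k-1, by omega⟩ : Fin (d-1))
          (fun i => deriv U (x ⟨i.1 + 1, by have := i.2; omega⟩ - x ⟨i.1, by have := i.2; omega⟩))]
      · rw [if_pos (Finset.mem_univ _)]
        congr 1
        congr 1 <;> exact xeq _ _ _ (by simp; omega)
      · congr 1
        simp [Fin.ext_iff]
        omega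
    · rw [if_neg h1]
      refine Finset.sum_eq_zero (fun i _ => ?_)
      rw [if_neg (by omega)]
  have e4 : (∑ i : Fin (d-1), (if i.1 = k then
          deriv U (x ⟨i.1 + 1, by have := i.2; omega⟩ - x ⟨i.1, by have := i.2; omega⟩) else 0)) =
      (if k+1 < d then deriv U (x ⟨k+1, by omega⟩ - x ⟨k, by omega⟩) else 0) := by
    by_cases h2 : k+1 < d
    · rw [if_pos h2, Finset.sum_congr rfl (fun i _ => ?_),
        Finset.sum_ite_eq' Finset.univ (⟨k, by omega⟩ : Fin (d-1))
          (fun i => deriv U (x ⟨i.1 + 1, by have := i.2; omega⟩ - x ⟨i.1, by have := i.2; omega⟩))]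
      · rw [if_pos (Finset.mem_univ _)]
      · congr 1
        simp [Fin.ext_iff]
    · rw [if_neg h2]
      refine Finset.sum_eq_zero (fun i _ => ?_)
      rw [if_neg (by have := i.2; omega)]
  rw [e3, e4]
  ring


variable {γ₁ γd : ℝ}

/-- explicit formula for the lower components of the drift -/
noncomputable def fLow (d : ℕ) (γ₁ γd : ℝ) (V U : ℝ → ℝ) (k : ℕ) (x : EE d) : ℝ :=
  if hk : k < d then
    (-(deriv V (x ⟨k, by omega⟩)
        + (if 1 ≤ k then deriv U (x ⟨k, by omega⟩ - x ⟨k-1, by omega⟩) else 0)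
        - (if k+1 < d then deriv U (x ⟨k+1, by omega⟩ - x ⟨k, by omega⟩) else 0))
      - (if k = 0 then γ₁ * x ⟨d, by omega⟩ else 0))
      - (if k = d-1 then γd * x ⟨2*d-1, by omega⟩ else 0)
  else 0

lemma drift_up (x : EE d) (i : Fin (2*d)) (h : i.1 < d) :
    driftE d γ₁ γd V U x i = x ⟨d + i.1, by have := i.2; omega⟩ := by
  simp only [driftE, dif_pos h]

lemma drift_low (hV : ContDiff ℝ (⊤ : ℕ∞) V) (hU : ContDiff ℝ (⊤ : ℕ∞) U)
    (x : EE d) (k : ℕ) (hk : k < d) :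
    driftE d γ₁ γd V U x ⟨d+k, by omega⟩ = fLow d γ₁ γd V U k x := by
  have h2 : ¬((⟨d+k, by omega⟩ : Fin (2*d)).1 < d) := by simp
  simp only [driftE, dif_neg h2]
  rw [(hamE_hasFDerivAt hV hU x).fderiv]
  have e0 : (⟨(⟨d+k, by omega⟩ : Fin (2*d)).1 - d, by omega⟩ : Fin (2*d))
      = (⟨k, by omega⟩ : Fin (2*d)) := by simp [Fin.ext_iff]
  rw [e0, hamDer_single x k hk, fLow, dif_pos hk]
  have c1 : ((⟨d+k, by omega⟩ : Fin (2*d)).1 = d) ↔ (k = 0) := by simp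
  have c2 : ((⟨d+k, by omega⟩ : Fin (2*d)).1 = 2*d-1) ↔ (k = d-1) := by simp; omega
  simp only [c1, c2]
  congr 1
  · congr 1
    by_cases hk0 : k = 0
    · rw [if_pos hk0, if_pos hk0, xeq x (by omega) (by omega) (by omega : d + k = d)]
    · rw [if_neg hk0, if_neg hk0]
  · by_cases hkd : k = d-1
    · rw [if_pos hkd, if_pos hkd, xeq x (by omega) (by omega) (by omega : d + k = 2*d-1)]
    · rw [if_neg hkd, if_neg hkd]

lemma hasFDerivAt_ite_const {d : ℕ} (c : Prop) [Decidable c] {f : EE d → ℝ}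
    {f' : EE d →L[ℝ] ℝ} {y : EE d} (h : HasFDerivAt f f' y) :
    HasFDerivAt (fun x => if c then f x else 0) (if c then f' else 0) y := by
  split_ifs with hc
  · exact h
  · exact hasFDerivAt_const 0 y

/-- the derivative of fLow -/
noncomputable def jLow (d : ℕ) (γ₁ γd : ℝ) (V U : ℝ → ℝ) (k : ℕ) (y : EE d) :
    EE d →L[ℝ] ℝ :=
  if hk : k < d then
    (-((deriv (deriv V) (y ⟨k, by omega⟩)) • pj d ⟨k, by omega⟩
        + (if 1 ≤ k then (deriv (deriv U) (y ⟨k, by omega⟩ - y ⟨k-1, by omega⟩)) •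
            (pj d ⟨k, by omega⟩ - pj d ⟨k-1, by omega⟩) else 0)
        - (if k+1 < d then (deriv (deriv U) (y ⟨k+1, by omega⟩ - y ⟨k, by omega⟩)) •
            (pj d ⟨k+1, by omega⟩ - pj d ⟨k, by omega⟩) else 0))
      - (if k = 0 then γ₁ • pj d ⟨d, by omega⟩ else 0))
      - (if k = d-1 then γd • pj d ⟨2*d-1, by omega⟩ else 0)
  else 0

lemma fLow_hasFDerivAt (hV : ContDiff ℝ (⊤ : ℕ∞) V) (hU : ContDiff ℝ (⊤ : ℕ∞) U)
    (k : ℕ) (y : EE d) :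
    HasFDerivAt (fLow d γ₁ γd V U k) (jLow d γ₁ γd V U k y) y := by
  have hVd : Differentiable ℝ (deriv V) :=
    ((contDiff_infty_iff_deriv.mp hV).2).differentiable (by simp)
  have hUd : Differentiable ℝ (deriv U) :=
    ((contDiff_infty_iff_deriv.mp hU).2).differentiable (by simp)
  by_cases hk : k < d
  · have hfl : fLow d γ₁ γd V U k = fun x : EE d =>
        (-(deriv V (x ⟨k, by omega⟩)
          + (if 1 ≤ k then deriv U (x ⟨k, by omega⟩ - x ⟨k-1, by omega⟩) else 0)
          - (if k+1 < d then deriv U (x ⟨k+1, by omega⟩ - x ⟨k, by omega⟩) else 0))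
        - (if k = 0 then γ₁ * x ⟨d, by omega⟩ else 0))
        - (if k = d-1 then γd * x ⟨2*d-1, by omega⟩ else 0) := by
      funext x
      simp only [fLow, dif_pos hk]
    rw [hfl, jLow, dif_pos hk]
    apply HasFDerivAt.sub
    apply HasFDerivAt.sub
    · apply HasFDerivAt.neg
      apply HasFDerivAt.sub
      apply HasFDerivAt.add
      · exact ((hVd _).hasDerivAt).comp_hasFDerivAt y (pj d ⟨k, by omega⟩).hasFDerivAt
      · exact hasFDerivAt_ite_const _
          (((hUd _).hasDerivAt).comp_hasFDerivAt y
            ((pj d ⟨k, by omega⟩) - (pj d ⟨k-1, by omega⟩)).hasFDerivAt)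
      · exact hasFDerivAt_ite_const _
          (((hUd _).hasDerivAt).comp_hasFDerivAt y
            ((pj d ⟨k+1, by omega⟩) - (pj d ⟨k, by omega⟩)).hasFDerivAt)
    · exact hasFDerivAt_ite_const _ (((pj d ⟨d, by omega⟩).hasFDerivAt).const_mul γ₁)
    · exact hasFDerivAt_ite_const _ (((pj d ⟨2*d-1, by omega⟩).hasFDerivAt).const_mul γd)
  · have hfl : fLow d γ₁ γd V U k = fun _ : EE d => (0:ℝ) := by
      funext x
      simp only [fLow, dif_neg hk]
    rw [hfl, jLow, dif_neg hk]
    exact hasFDerivAt_const 0 y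

lemma jLow_apply (k : ℕ) (hk : k < d) (y v : EE d) :
    jLow d γ₁ γd V U k y v =
      (-(deriv (deriv V) (y ⟨k, by omega⟩) * v ⟨k, by omega⟩
        + (if 1 ≤ k then deriv (deriv U) (y ⟨k, by omega⟩ - y ⟨k-1, by omega⟩) *
            (v ⟨k, by omega⟩ - v ⟨k-1, by omega⟩) else 0)
        - (if k+1 < d then deriv (deriv U) (y ⟨k+1, by omega⟩ - y ⟨k, by omega⟩) *
            (v ⟨k+1, by omega⟩ - v ⟨k, by omega⟩) else 0))
      - (if k = 0 then γ₁ * v ⟨d, by omega⟩ else 0))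
      - (if k = d-1 then γd * v ⟨2*d-1, by omega⟩ else 0) := by
  simp only [jLow, dif_pos hk, ContinuousLinearMap.coe_sub', Pi.sub_apply,
    ContinuousLinearMap.neg_apply, ContinuousLinearMap.add_apply,
    apply_ite (fun (L : EE d →L[ℝ] ℝ) => L v), ContinuousLinearMap.smul_apply,
    ContinuousLinearMap.sub_apply, ContinuousLinearMap.zero_apply, pj_apply, smul_eq_mul,
    mul_sub]

lemma sum_single_clm (L : EE d →L[ℝ] ℝ) (v : EE d) :
    (∑ j : Fin (2*d), L (Pi.single j 1) * v j) = L v := by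
  have hv : v = ∑ j : Fin (2*d), v j • (Pi.single j 1 : EE d) := by
    funext a
    rw [Finset.sum_apply]
    simp only [Pi.smul_apply, Pi.single_apply, smul_eq_mul, mul_ite, mul_one, mul_zero]
    rw [Finset.sum_ite_eq Finset.univ a (fun j => v j)]
    simp
  conv_rhs => rw [hv]
  rw [_root_.map_sum]
  refine Finset.sum_congr rfl (fun j _ => ?_)
  rw [L.map_smul, smul_eq_mul, mul_comm]

lemma fderiv_drift_up (y : EE d) (i : Fin (2*d)) (h : i.1 < d) :
    fderiv ℝ (fun y => driftE d γ₁ γd V U y i) y = pj d ⟨d+i.1, by have := i.2; omega⟩ := by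
  rw [show (fun y => driftE d γ₁ γd V U y i)
      = fun y : EE d => y ⟨d+i.1, by have := i.2; omega⟩ from funext fun y => drift_up y i h]
  exact (pj d ⟨d+i.1, by have := i.2; omega⟩).hasFDerivAt.fderiv

lemma fderiv_drift_low (hV : ContDiff ℝ (⊤ : ℕ∞) V) (hU : ContDiff ℝ (⊤ : ℕ∞) U)
    (y : EE d) (k : ℕ) (hk : k < d) :
    fderiv ℝ (fun y => driftE d γ₁ γd V U y ⟨d+k, by omega⟩) y = jLow d γ₁ γd V U k y := by
  rw [show (fun y => driftE d γ₁ γd V U y ⟨d+k, by omega⟩) = fLow d γ₁ γd V U k from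
    funext fun y => drift_low hV hU y k hk]
  exact (fLow_hasFDerivAt hV hU k y).fderiv

/-- the `d`-th column of `BmatE n`, as a vector field -/
noncomputable def wv (d : ℕ) (γ₁ γd : ℝ) (V U : ℝ → ℝ) (hd : 0 < d) (n : ℕ) (y : EE d)
    (i : Fin (2*d)) : ℝ :=
  BmatE d (driftE d γ₁ γd V U) n y i ⟨d, by omega⟩

lemma wv_rec (hd : 0 < d) (n : ℕ) (y : EE d) (i : Fin (2*d)) :
    wv d γ₁ γd V U hd (n+1) y i
      = fderiv ℝ (fun y' => wv d γ₁ γd V U hd n y' i) y (driftE d γ₁ γd V U y)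
        - ∑ j : Fin (2*d), jacE d (driftE d γ₁ γd V U) y i j * wv d γ₁ γd V U hd n y j := by
  simp only [wv, BmatE, Matrix.sub_apply, Matrix.of_apply, Matrix.mul_apply]

lemma jac_row_up (y : EE d) (i : Fin (2*d)) (h : i.1 < d) (v : EE d) :
    (∑ j : Fin (2*d), jacE d (driftE d γ₁ γd V U) y i j * v j)
      = v ⟨d+i.1, by have := i.2; omega⟩ := by
  have e : ∀ j : Fin (2*d), jacE d (driftE d γ₁ γd V U) y i j
      = (pj d ⟨d+i.1, by have := i.2; omega⟩) (Pi.single j 1) := by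
    intro j
    simp only [jacE, Matrix.of_apply]
    rw [fderiv_drift_up y i h]
  rw [Finset.sum_congr rfl (fun j _ => by rw [e j]), sum_single_clm]
  rfl

lemma jac_row_low (hV : ContDiff ℝ (⊤ : ℕ∞) V) (hU : ContDiff ℝ (⊤ : ℕ∞) U)
    (y : EE d) (k : ℕ) (hk : k < d) (v : EE d) :
    (∑ j : Fin (2*d), jacE d (driftE d γ₁ γd V U) y ⟨d+k, by omega⟩ j * v j)
      = jLow d γ₁ γd V U k y v := by
  have e : ∀ j : Fin (2*d), jacE d (driftE d γ₁ γd V U) y ⟨d+k, by omega⟩ j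
      = (jLow d γ₁ γd V U k y) (Pi.single j 1) := by
    intro j
    simp only [jacE, Matrix.of_apply]
    rw [fderiv_drift_low hV hU y k hk]
  rw [Finset.sum_congr rfl (fun j _ => by rw [e j]), sum_single_clm]

lemma wv_rec_up (hd : 0 < d) (n : ℕ) (y : EE d) (k : ℕ) (hk : k < d) :
    wv d γ₁ γd V U hd (n+1) y ⟨k, by omega⟩
      = fderiv ℝ (fun y' => wv d γ₁ γd V U hd n y' ⟨k, by omega⟩) y (driftE d γ₁ γd V U y)
        - wv d γ₁ γd V U hd n y ⟨d+k, by omega⟩ := by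
  rw [wv_rec, jac_row_up y ⟨k, by omega⟩ (by simpa using hk)]

lemma wv_rec_low (hV : ContDiff ℝ (⊤ : ℕ∞) V) (hU : ContDiff ℝ (⊤ : ℕ∞) U)
    (hd : 0 < d) (n : ℕ) (y : EE d) (k : ℕ) (hk : k < d) :
    wv d γ₁ γd V U hd (n+1) y ⟨d+k, by omega⟩
      = fderiv ℝ (fun y' => wv d γ₁ γd V U hd n y' ⟨d+k, by omega⟩) y (driftE d γ₁ γd V U y)
        - jLow d γ₁ γd V U k y (wv d γ₁ γd V U hd n y) := by
  rw [wv_rec, jac_row_low hV hU y k hk]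

/-- base case: explicit values of `wv 0` -/
lemma wv_zero_up (hd : 0 < d) (y : EE d) (i : ℕ) (h : i < d) :
    wv d γ₁ γd V U hd 0 y ⟨i, by omega⟩ = if i = 0 then 1 else 0 := by
  simp only [wv, BmatE, jacE, Matrix.of_apply]
  rw [fderiv_drift_up y ⟨i, by omega⟩ (by simpa using h)]
  rw [show (pj d ⟨d + (⟨i, by omega⟩ : Fin (2*d)).1, by simp; omega⟩)
      (Pi.single (⟨d, by omega⟩ : Fin (2*d)) 1)
    = (Pi.single (⟨d, by omega⟩ : Fin (2*d)) (1:ℝ) : EE d) ⟨d + i, by omega⟩ from rfl]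
  rw [single_eval]
  by_cases h0 : i = 0
  · rw [if_pos (by simp [h0]), if_pos h0]
  · rw [if_neg (by simp; omega), if_neg h0]

lemma wv_zero_low (hV : ContDiff ℝ (⊤ : ℕ∞) V) (hU : ContDiff ℝ (⊤ : ℕ∞) U)
    (hd : 0 < d) (y : EE d) (i : ℕ) (h : i < d) (h1 : 1 ≤ i) :
    wv d γ₁ γd V U hd 0 y ⟨d+i, by omega⟩ = 0 := by
  simp only [wv, BmatE, jacE, Matrix.of_apply]
  rw [fderiv_drift_low hV hU y i h, jLow_apply i h]
  simp only [single_eval]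
  have hd2 : 2 ≤ d := by omega
  split_ifs <;> (try simp_all) <;> omega

lemma wv_support (hV : ContDiff ℝ (⊤ : ℕ∞) V) (hU : ContDiff ℝ (⊤ : ℕ∞) U)
    (hd : 0 < d) (n : ℕ) :
    ∀ (y : EE d) (i : ℕ) (h : i < d),
      (n/2 < i → wv d γ₁ γd V U hd n y ⟨i, by omega⟩ = 0)
      ∧ ((n+1)/2 < i → wv d γ₁ γd V U hd n y ⟨d+i, by omega⟩ = 0) := by
  induction n with
  | zero =>
    intro y i h
    constructor
    · intro hi
      rw [wv_zero_up hd y i h, if_neg (by omega)]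
    · intro hi
      exact wv_zero_low hV hU hd y i h (by omega)
  | succ n ih =>
    intro y i h
    constructor
    · intro hi
      rw [wv_rec_up hd n y i h]
      have hz : (fun y' => wv d γ₁ γd V U hd n y' ⟨i, by omega⟩) = fun _ => (0:ℝ) :=
        funext fun y' => (ih y' i h).1 (by omega)
      rw [hz, (ih y i h).2 (by omega)]
      simp
    · intro hi
      rw [wv_rec_low hV hU hd n y i h]
      have hz : (fun y' => wv d γ₁ γd V U hd n y' ⟨d+i, by omega⟩) = fun _ => (0:ℝ) :=
        funext fun y' => (ih y' i h).2 (by omega)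
      rw [hz, jLow_apply i h]
      rw [(ih y i h).1 (by omega)]
      rw [xeq (wv d γ₁ γd V U hd n y) (by omega) (by omega) (show 2*d-1 = d+(d-1) by omega),
        (ih y (d-1) (by omega)).2 (by omega)]
      rw [if_neg (show ¬ i = 0 by omega)]
      have hi1 : 1 ≤ i := by omega
      rw [if_pos hi1,
        xeq (wv d γ₁ γd V U hd n y) (by omega) (by omega) (rfl : i-1 = i-1),
        (ih y (i-1) (by omega)).1 (by omega)]
      by_cases h2 : i+1 < d
      · rw [if_pos h2, (ih y (i+1) (by omega)).1 (by omega)]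
        simp
      · rw [if_neg h2]
        simp

noncomputable def cc (d : ℕ) (U : ℝ → ℝ) (k : ℕ) (y : EE d) : ℝ :=
  ∏ m ∈ Finset.range k,
    (if h : m+1 < d then deriv (deriv U) (y ⟨m+1, by omega⟩ - y ⟨m, by omega⟩) else 1)

lemma cc_pos (hU'' : ∀ s : ℝ, 0 < deriv (deriv U) s) (k : ℕ) (y : EE d) :
    0 < cc d U k y := by
  refine Finset.prod_pos (fun m _ => ?_)
  by_cases h : m+1 < d
  · rw [dif_pos h]
    exact hU'' _
  · rw [dif_neg h]
    norm_num

lemma wv_lead (hV : ContDiff ℝ (⊤ : ℕ∞) V) (hU : ContDiff ℝ (⊤ : ℕ∞) U) (hd : 0 < d) :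
    ∀ k : ℕ,
      (∀ (y : EE d) (h : k < d), wv d γ₁ γd V U hd (2*k) y ⟨k, by omega⟩ = cc d U k y)
      ∧ (∀ (y : EE d) (h : k+1 < d),
          wv d γ₁ γd V U hd (2*k+1) y ⟨d+(k+1), by omega⟩ = -(cc d U (k+1) y)) := by
  intro k
  induction k with
  | zero =>
    have p1 : ∀ (y : EE d) (h : 0 < d),
        wv d γ₁ γd V U hd (2*0) y ⟨0, by omega⟩ = cc d U 0 y := by
      intro y h
      rw [show 2*0 = 0 from rfl, wv_zero_up hd y 0 h, if_pos rfl]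
      simp [cc]
    refine ⟨p1, ?_⟩
    intro y h
    rw [wv_rec_low hV hU hd (2*0) y (0+1) (by omega)]
    have hz : (fun y' => wv d γ₁ γd V U hd (2*0) y' ⟨d+(0+1), by omega⟩) = fun _ => (0:ℝ) :=
      funext fun y' => (wv_support hV hU hd (2*0) y' (0+1) (by omega)).2 (by omega)
    rw [hz, jLow_apply (0+1) (by omega)]
    rw [(wv_support hV hU hd (2*0) y (0+1) (by omega)).1 (by omega)]
    rw [xeq (wv d γ₁ γd V U hd (2*0) y) (by omega) (by omega) (show 0+1-1 = 0 by omega),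
      p1 y (by omega)]
    rw [xeq (wv d γ₁ γd V U hd (2*0) y) (by omega) (by omega) (show 2*d-1 = d+(d-1) by omega),
      (wv_support hV hU hd (2*0) y (d-1) (by omega)).2 (by omega)]
    rw [if_neg (show ¬ (0+1 : ℕ) = 0 by omega), if_pos (show (1:ℕ) ≤ 0+1 by omega)]
    by_cases h2 : 0+1+1 < d
    · rw [if_pos h2, (wv_support hV hU hd (2*0) y (0+1+1) (by omega)).1 (by omega)]
      rw [show cc d U (0+1) y = cc d U 0 y *
          (if h : 0+1 < d then deriv (deriv U) (y ⟨0+1, by omega⟩ - y ⟨0, by omega⟩) else 1)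
        from Finset.prod_range_succ _ 0, dif_pos (by omega : 0+1 < d)]
      simp [cc]
    · rw [if_neg h2]
      rw [show cc d U (0+1) y = cc d U 0 y *
          (if h : 0+1 < d then deriv (deriv U) (y ⟨0+1, by omega⟩ - y ⟨0, by omega⟩) else 1)
        from Finset.prod_range_succ _ 0, dif_pos (by omega : 0+1 < d)]
      simp [cc]
  | succ k ih =>
    obtain ⟨ih1, ih2⟩ := ih
    have p1 : ∀ (y : EE d) (h : k+1 < d),
        wv d γ₁ γd V U hd (2*(k+1)) y ⟨k+1, by omega⟩ = cc d U (k+1) y := by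
      intro y h
      rw [show 2*(k+1) = (2*k+1)+1 by ring, wv_rec_up hd (2*k+1) y (k+1) (by omega)]
      have hz : (fun y' => wv d γ₁ γd V U hd (2*k+1) y' ⟨k+1, by omega⟩) = fun _ => (0:ℝ) :=
        funext fun y' => (wv_support hV hU hd (2*k+1) y' (k+1) (by omega)).1 (by omega)
      rw [hz, ih2 y h]
      simp
    refine ⟨p1, ?_⟩
    intro y h
    rw [wv_rec_low hV hU hd (2*(k+1)) y (k+1+1) (by omega)]
    have hz : (fun y' => wv d γ₁ γd V U hd (2*(k+1)) y' ⟨d+(k+1+1), by omega⟩)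
        = fun _ => (0:ℝ) :=
      funext fun y' => (wv_support hV hU hd (2*(k+1)) y' (k+1+1) (by omega)).2 (by omega)
    rw [hz, jLow_apply (k+1+1) (by omega)]
    rw [(wv_support hV hU hd (2*(k+1)) y (k+1+1) (by omega)).1 (by omega)]
    rw [xeq (wv d γ₁ γd V U hd (2*(k+1)) y) (by omega) (by omega)
        (show k+1+1-1 = k+1 by omega), p1 y (by omega)]
    rw [xeq (wv d γ₁ γd V U hd (2*(k+1)) y) (by omega) (by omega)
        (show 2*d-1 = d+(d-1) by omega),
      (wv_support hV hU hd (2*(k+1)) y (d-1) (by omega)).2 (by omega)]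
    rw [if_neg (show ¬ (k+1+1 : ℕ) = 0 by omega), if_pos (show (1:ℕ) ≤ k+1+1 by omega)]
    have hcc : cc d U (k+1+1) y = cc d U (k+1) y *
        (if h : k+1+1 < d then deriv (deriv U) (y ⟨k+1+1, by omega⟩ - y ⟨k+1, by omega⟩) else 1) :=
      Finset.prod_range_succ _ (k+1)
    rw [hcc, dif_pos (by omega : k+1+1 < d)]
    by_cases h2 : k+1+1+1 < d
    · rw [if_pos h2, (wv_support hV hU hd (2*(k+1)) y (k+1+1+1) (by omega)).1 (by omega)]
      simp
      ring
    · rw [if_neg h2]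
      simp
      ring

lemma pi_repr (v : EE d) : v = ∑ i : Fin (2*d), v i • (Pi.single i 1 : EE d) := by
  funext a
  rw [Finset.sum_apply]
  simp only [Pi.smul_apply, Pi.single_apply, smul_eq_mul, mul_ite, mul_one, mul_zero]
  rw [Finset.sum_ite_eq Finset.univ a (fun j => v j)]
  simp

lemma smul_mem_inv (K : Submodule ℝ (EE d)) (c : ℝ) (hc : c ≠ 0) (v : EE d)
    (h : c • v ∈ K) : v ∈ K := by
  have := K.smul_mem c⁻¹ h
  rwa [smul_smul, inv_mul_cancel₀ hc, one_smul] at this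

lemma single_mem_of (K : Submodule ℝ (EE d)) (v : EE d) (hv : v ∈ K) (t : Fin (2*d))
    (ht : v t ≠ 0)
    (h : ∀ i : Fin (2*d), i ≠ t → v i = 0 ∨ (Pi.single i 1 : EE d) ∈ K) :
    (Pi.single t 1 : EE d) ∈ K := by
  have h1 : (v t) • (Pi.single t 1 : EE d) ∈ K := by
    have e : (v t) • (Pi.single t 1 : EE d)
        = v - ∑ i ∈ Finset.univ.erase t, v i • (Pi.single i 1 : EE d) := by
      rw [Finset.sum_erase_eq_sub (Finset.mem_univ t), ← pi_repr v]
      abel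
    rw [e]
    refine Submodule.sub_mem K hv (Submodule.sum_mem K (fun i hi => ?_))
    rcases h i (Finset.ne_of_mem_erase hi) with h0 | hK
    · rw [h0, zero_smul]
      exact K.zero_mem
    · exact K.smul_mem _ hK
  exact smul_mem_inv K (v t) ht _ h1

lemma matA_col (hd3 : 3 ≤ d) (T₁ Td : ℝ) :
    (matA d T₁ Td)ᵀ (⟨d, by omega⟩ : Fin (2*d))
      = Real.sqrt T₁ • (Pi.single (⟨d, by omega⟩ : Fin (2*d)) 1 : EE d) := by
  funext j
  simp only [Matrix.transpose_apply, matA, Matrix.of_apply, Pi.smul_apply, smul_eq_mul]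
  rw [single_eval]
  by_cases hj : j.1 = d
  · rw [if_pos ⟨hj, trivial⟩, if_pos hj, mul_one]
  · rw [if_neg (fun hh => hj hh.1), if_neg (by rintro ⟨h1, h2⟩; omega),
      if_neg hj, mul_zero]

lemma BA_col (hd3 : 3 ≤ d) (T₁ Td : ℝ) (x : EE d) (m : ℕ) :
    (BmatE d (driftE d γ₁ γd V U) m x * matA d T₁ Td)ᵀ (⟨d, by omega⟩ : Fin (2*d))
      = Real.sqrt T₁ • (wv d γ₁ γd V U (by omega) m x) := by
  funext i
  simp only [Matrix.transpose_apply, Matrix.mul_apply, Pi.smul_apply, smul_eq_mul]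
  rw [Finset.sum_congr rfl (fun j _ => ?_),
    Finset.sum_ite_eq' Finset.univ (⟨d, by omega⟩ : Fin (2*d))
      (fun j => BmatE d (driftE d γ₁ γd V U) m x i j * Real.sqrt T₁)]
  · rw [if_pos (Finset.mem_univ _)]
    simp only [wv]
    ring
  · simp only [matA, Matrix.of_apply]
    by_cases hj : j = (⟨d, by omega⟩ : Fin (2*d))
    · subst hj
      rw [if_pos ⟨rfl, trivial⟩, if_pos rfl]
    · have hj' : ¬ (j.1 = d) := fun h => hj (Fin.ext h)
      rw [if_neg (fun hh => hj' hh.1), if_neg (by rintro ⟨h1, h2⟩; omega),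
        mul_zero, if_neg hj]

end S17


theorem stmt17 (d : ℕ) (hd : 3 ≤ d) (γ₁ γd : ℝ) (V U : ℝ → ℝ)
    (hV : ContDiff ℝ (⊤ : ℕ∞) V) (hU : ContDiff ℝ (⊤ : ℕ∞) U)
    (hU'' : ∀ s : ℝ, 0 < deriv (deriv U) s)
    (T₁ Td : ℝ) (hT₁ : 0 < T₁) (hTd : 0 < Td) :
    ∀ x : EE d, ∃ n : ℕ,
      Submodule.span ℝ
          (Set.range (matA d T₁ Td)ᵀ ∪
            ⋃ m : Fin n, Set.range (BmatE d (driftE d γ₁ γd V U) m.1 x * matA d T₁ Td)ᵀ) =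
        (⊤ : Submodule ℝ (EE d)) := by
  intro x
  refine ⟨2*d-1, ?_⟩
  have hd0 : 0 < d := by omega
  have hs1 : Real.sqrt T₁ ≠ 0 := (Real.sqrt_pos.mpr hT₁).ne'
  set K := Submodule.span ℝ
      (Set.range (matA d T₁ Td)ᵀ ∪
        ⋃ m : Fin (2*d-1), Set.range (BmatE d (driftE d γ₁ γd V U) m.1 x * matA d T₁ Td)ᵀ)
    with hKdef
  rw [Submodule.eq_top_iff']
  intro v
  have hw : ∀ m0 : ℕ, m0 < 2*d-1 → S17.wv d γ₁ γd V U hd0 m0 x ∈ K := by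
    intro m0 hm0
    apply S17.smul_mem_inv K (Real.sqrt T₁) hs1
    rw [← S17.BA_col hd T₁ Td x m0]
    exact Submodule.subset_span
      (Set.mem_union_right _ (Set.mem_iUnion.mpr ⟨⟨m0, hm0⟩, Set.mem_range_self _⟩))
  have hA : (Pi.single (⟨d, by omega⟩ : Fin (2*d)) (1:ℝ) : EE d) ∈ K := by
    apply S17.smul_mem_inv K (Real.sqrt T₁) hs1
    rw [← S17.matA_col hd T₁ Td]
    exact Submodule.subset_span (Set.mem_union_left _ (Set.mem_range_self _))
  have key : ∀ (k : ℕ) (hkd : k < d),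
      ((Pi.single (⟨d+k, by omega⟩ : Fin (2*d)) (1:ℝ) : EE d) ∈ K
        ∧ (Pi.single (⟨k, by omega⟩ : Fin (2*d)) (1:ℝ) : EE d) ∈ K) := by
    intro k
    induction k using Nat.strong_induction_on with
    | _ k IH =>
      intro hk
      have hu : (Pi.single (⟨d+k, by omega⟩ : Fin (2*d)) (1:ℝ) : EE d) ∈ K := by
        by_cases hk0 : k = 0
        · subst hk0
          rw [show (⟨d+0, by omega⟩ : Fin (2*d)) = (⟨d, by omega⟩ : Fin (2*d))
            from Fin.ext (by simp)]
          exact hA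
        · have hv := hw (2*(k-1)+1) (by omega)
          have hlead := (S17.wv_lead (γ₁ := γ₁) (γd := γd) hV hU hd0 (k-1)).2 x (by omega)
          rw [show (⟨d+((k-1)+1), by omega⟩ : Fin (2*d)) = (⟨d+k, by omega⟩ : Fin (2*d))
            from Fin.ext (by simp; omega)] at hlead
          have hcc : S17.cc d U ((k-1)+1) x = S17.cc d U k x := by
            rw [show (k-1)+1 = k from by omega]
          rw [hcc] at hlead
          refine S17.single_mem_of K _ hv ⟨d+k, by omega⟩
            (by rw [hlead]; exact neg_ne_zero.mpr (S17.cc_pos hU'' k x).ne') ?_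
          intro i hi
          by_cases hiz : i.1 < d
          · by_cases hik : i.1 < k
            · right
              have h2 := (IH i.1 hik (by omega)).2
              rw [show i = (⟨i.1, by omega⟩ : Fin (2*d)) from Fin.ext rfl]
              exact h2
            · left
              have h0 := (S17.wv_support (γ₁ := γ₁) (γd := γd) hV hU hd0 (2*(k-1)+1) x i.1 hiz).1 (by omega)
              rw [show (⟨i.1, by omega⟩ : Fin (2*d)) = i from Fin.ext rfl] at h0
              exact h0
          · by_cases hik : i.1 - d < k
            · right
              have h2 := (IH (i.1-d) hik (by omega)).1
              rw [show i = (⟨d+(i.1-d), by omega⟩ : Fin (2*d)) from Fin.ext (by simp; omega)]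
              exact h2
            · left
              have hne : ¬ (i.1 - d = k) := by
                intro hh
                exact hi (Fin.ext (by simp; omega))
              have h0 := (S17.wv_support (γ₁ := γ₁) (γd := γd) hV hU hd0 (2*(k-1)+1) x (i.1-d) (by omega)).2
                (by omega)
              rw [show (⟨d+(i.1-d), by omega⟩ : Fin (2*d)) = i from Fin.ext (by simp; omega)]
                at h0
              exact h0
      have hz : (Pi.single (⟨k, by omega⟩ : Fin (2*d)) (1:ℝ) : EE d) ∈ K := by
        have hv := hw (2*k) (by omega)
        have hlead := (S17.wv_lead (γ₁ := γ₁) (γd := γd) hV hU hd0 k).1 x hk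
        refine S17.single_mem_of K _ hv ⟨k, by omega⟩
          (by rw [hlead]; exact (S17.cc_pos hU'' k x).ne') ?_
        intro i hi
        by_cases hiz : i.1 < d
        · by_cases hik : i.1 < k
          · right
            have h2 := (IH i.1 hik (by omega)).2
            rw [show i = (⟨i.1, by omega⟩ : Fin (2*d)) from Fin.ext rfl]
            exact h2
          · left
            have hne : ¬ (i.1 = k) := by
              intro hh
              exact hi (Fin.ext (by simp; omega))
            have h0 := (S17.wv_support (γ₁ := γ₁) (γd := γd) hV hU hd0 (2*k) x i.1 hiz).1 (by omega)
            rw [show (⟨i.1, by omega⟩ : Fin (2*d)) = i from Fin.ext rfl] at h0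
            exact h0
        · by_cases hik : i.1 - d < k
          · right
            have h2 := (IH (i.1-d) hik (by omega)).1
            rw [show i = (⟨d+(i.1-d), by omega⟩ : Fin (2*d)) from Fin.ext (by simp; omega)]
            exact h2
          · by_cases hieq : i.1 - d = k
            · right
              rw [show i = (⟨d+k, by omega⟩ : Fin (2*d)) from Fin.ext (by simp; omega)]
              exact hu
            · left
              have h0 := (S17.wv_support (γ₁ := γ₁) (γd := γd) hV hU hd0 (2*k) x (i.1-d) (by omega)).2 (by omega)
              rw [show (⟨d+(i.1-d), by omega⟩ : Fin (2*d)) = i from Fin.ext (by simp; omega)]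
                at h0
              exact h0
      exact ⟨hu, hz⟩
  rw [S17.pi_repr v]
  refine Submodule.sum_mem K (fun i _ => K.smul_mem _ ?_)
  by_cases hiz : i.1 < d
  · have h2 := (key i.1 hiz).2
    rw [show i = (⟨i.1, by omega⟩ : Fin (2*d)) from Fin.ext rfl]
    exact h2
  · have h2 := (key (i.1-d) (by omega)).1
    rw [show i = (⟨d+(i.1-d), by omega⟩ : Fin (2*d)) from Fin.ext (by simp; omega)]
    exact h2
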